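/- Let D be a positive integer with decimal expansion D = Σ_{i=0}^n a_i·10^i (a_n ≠ 0) such that D > rev(D) and E = D − rev(D) has the same number of decimal digits (n+1) as D, and let F = E + rev(E). Then F = Σ_{i=0}^n (10·b_i − b_{i−1} + 10·b_{n−i} − b_{n−i−1})·10^i, where (b_i) is the digital borrow sequence of D; in particular F depends only on the borrow sequence (b_i) and not otherwise on the digits a_i of D. -/

import Mathlib

/-- Digital reversal of a natural number (in base 10). -/
def rev (D : ℕ) : ℕ := Nat.ofDigits 10 ((Nat.digits 10 D).reverse)

/-- The digital borrow sequence for the subtraction `D - rev D`, where `a` is the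
digit sequence of `D` (little-endian) and `n+1` is the number of digits:
`b i = 1` iff `a i - a (n-i) - b (i-1) < 0`, with `b (-1) = 0`. -/
def borrow (a : ℕ → ℕ) (n : ℕ) : ℕ → ℕ
  | 0 => if (a 0 : ℤ) - (a n : ℤ) < 0 then 1 else 0
  | i + 1 => if (a (i + 1) : ℤ) - (a (n - (i + 1)) : ℤ) - (borrow a n i : ℤ) < 0 then 1 else 0

/-- The borrow sequence with indices shifted by one, so that `borrowExt a n 0 = b (-1) = 0`
and `borrowExt a n (j+1) = b j`. -/
def borrowExt (a : ℕ → ℕ) (n : ℕ) : ℕ → ℕ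
  | 0 => 0
  | j + 1 => borrow a n j

lemma ofDigits_map_range (g : ℕ → ℕ) (m : ℕ) :
    Nat.ofDigits 10 ((List.range m).map g) = ∑ i ∈ Finset.range m, g i * 10 ^ i := by
  induction m with
  | zero => simp
  | succ m ih =>
    rw [List.range_succ, List.map_append, Nat.ofDigits_append, Finset.sum_range_succ, ih]
    simp [Nat.ofDigits_singleton, mul_comm]

lemma reverse_map_range (g : ℕ → ℕ) (m : ℕ) :
    (((List.range (m + 1)).map g).reverse) = (List.range (m + 1)).map (fun i => g (m - i)) := by
  apply List.ext_getElem
  · simp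
  · intro i h1 h2
    simp only [List.length_reverse, List.length_map, List.length_range] at h1
    rw [List.getElem_reverse]
    simp only [List.getElem_map, List.getElem_range]
    congr 1
    simp only [List.length_map, List.length_range]
    omega

lemma nine_sum (m : ℕ) : (∑ i ∈ Finset.range m, (9 : ℤ) * 10 ^ i) = 10 ^ m - 1 := by
  induction m with
  | zero => simp
  | succ m ih => rw [Finset.sum_range_succ, ih]; ring

lemma nat_sum_lt (g : ℕ → ℕ) (m : ℕ) (h : ∀ i, i < m → g i ≤ 9) :
    ∑ i ∈ Finset.range m, g i * 10 ^ i < 10 ^ m := by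
  induction m with
  | zero => simp
  | succ m ih =>
    rw [Finset.sum_range_succ]
    have h1 : ∑ i ∈ Finset.range m, g i * 10 ^ i < 10 ^ m :=
      ih fun i hi => h i (by omega)
    have h2 : g m * 10 ^ m ≤ 9 * 10 ^ m := Nat.mul_le_mul_right _ (h m (by omega))
    calc ∑ i ∈ Finset.range m, g i * 10 ^ i + g m * 10 ^ m
        < 10 ^ m + 9 * 10 ^ m := by omega
      _ = 10 ^ (m + 1) := by ring

/-- uniform recursion for borrow -/
lemma borrow_eq (a : ℕ → ℕ) (n : ℕ) (i : ℕ) :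
    borrow a n i =
      if (a i : ℤ) - (a (n - i) : ℤ) - (borrowExt a n i : ℤ) < 0 then 1 else 0 := by
  cases i with
  | zero => simp [borrow, borrowExt]
  | succ j => simp [borrow, borrowExt]

/-- If `D = Σ_{i=0}^n a_i 10^i` (with `a_n ≠ 0`, digits `< 10`),
`D > rev D`, and `E = D - rev D` has the same number `n+1` of decimal digits as `D`,
then `F = E + rev E` satisfies
`F = Σ_{i=0}^n (10 b_i - b_{i-1} + 10 b_{n-i} - b_{n-i-1}) 10^i`,
so `F` depends only on the borrow sequence. -/
theorem stmt0 (D n : ℕ) (a : ℕ → ℕ)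
    (ha : ∀ i, i ≤ n → a i < 10) (han : a n ≠ 0)
    (hD : D = ∑ i ∈ Finset.range (n + 1), a i * 10 ^ i)
    (hlt : rev D < D)
    (hlen : (Nat.digits 10 (D - rev D)).length = n + 1) :
    ((D - rev D) + rev (D - rev D) : ℤ) =
      ∑ i ∈ Finset.range (n + 1),
        (10 * (borrowExt a n (i + 1) : ℤ) - (borrowExt a n i : ℤ)
          + 10 * (borrowExt a n (n - i + 1) : ℤ) - (borrowExt a n (n - i) : ℤ)) * 10 ^ i := by
  set b := borrow a n with hbdef
  set bE := borrowExt a n with hbEdef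
  -- digits of D
  have hL : Nat.digits 10 D = (List.range (n + 1)).map a := by
    have hD' : D = Nat.ofDigits 10 ((List.range (n + 1)).map a) := by
      rw [ofDigits_map_range]; exact hD
    rw [hD']
    apply Nat.digits_ofDigits 10 (by norm_num)
    · intro x hx
      simp only [List.mem_map, List.mem_range] at hx
      obtain ⟨i, hi, rfl⟩ := hx
      exact ha i (by omega)
    · intro h
      rw [List.getLast_eq_getElem]
      simp only [List.length_map, List.length_range]
      have : n + 1 - 1 < (List.range (n + 1)).length := by simp
      rw [List.getElem_map]
      simpa using han
  -- rev D as sum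
  have hrevD : rev D = ∑ i ∈ Finset.range (n + 1), a (n - i) * 10 ^ i := by
    rw [rev, hL, reverse_map_range, ofDigits_map_range]
  -- borrow values are 0 or 1
  have hb01 : ∀ i, b i ≤ 1 := by
    intro i; rw [hbdef, borrow_eq]; split <;> omega
  have hbE01 : ∀ i, bE i ≤ 1 := by
    intro i
    cases i with
    | zero => simp [hbEdef, borrowExt]
    | succ j => exact hb01 j
  -- the digit values of E
  set e : ℕ → ℤ := fun i => (a i : ℤ) - (a (n - i) : ℤ) - (bE i : ℤ) + 10 * (b i : ℤ)
    with hedef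
  have hbE_succ : ∀ i, bE (i + 1) = b i := fun i => rfl
  have he_bound : ∀ i, i ≤ n → 0 ≤ e i ∧ e i ≤ 9 := by
    intro i hi
    have h1 : (a i : ℤ) ≤ 9 := by exact_mod_cast Nat.lt_succ_iff.mp (ha i hi)
    have h2 : (a (n - i) : ℤ) ≤ 9 := by
      exact_mod_cast Nat.lt_succ_iff.mp (ha (n - i) (by omega))
    have h3 : (bE i : ℤ) ≤ 1 := by exact_mod_cast hbE01 i
    have h4 : (0 : ℤ) ≤ a i := by positivity
    have h5 : (0 : ℤ) ≤ a (n - i) := by positivity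
    have h6 : (0 : ℤ) ≤ bE i := by positivity
    have hb := borrow_eq a n i
    rw [← hbdef, ← hbEdef] at hb
    rw [hedef]
    simp only
    split at hb <;> rename_i hcond <;> rw [hb] <;> push_cast <;> constructor <;> omega
  -- key identity
  have hEeq : (D : ℤ) - (rev D : ℤ) =
      (∑ i ∈ Finset.range (n + 1), e i * 10 ^ i) - 10 ^ (n + 1) * (bE (n + 1) : ℤ) := by
    have hDsum : (D : ℤ) = ∑ i ∈ Finset.range (n + 1), (a i : ℤ) * 10 ^ i := by
      rw [hD]; push_cast; rfl
    have hRsum : (rev D : ℤ) = ∑ i ∈ Finset.range (n + 1), (a (n - i) : ℤ) * 10 ^ i := by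
      rw [hrevD]; push_cast; rfl
    have htel : ∑ i ∈ Finset.range (n + 1),
        ((10 * (b i : ℤ) - (bE i : ℤ)) * 10 ^ i)
        = 10 ^ (n + 1) * (bE (n + 1) : ℤ) := by
      have := Finset.sum_range_sub (fun i => (bE i : ℤ) * 10 ^ i) (n + 1)
      calc ∑ i ∈ Finset.range (n + 1), ((10 * (b i : ℤ) - (bE i : ℤ)) * 10 ^ i)
          = ∑ i ∈ Finset.range (n + 1),
              ((bE (i + 1) : ℤ) * 10 ^ (i + 1) - (bE i : ℤ) * 10 ^ i) := by
            apply Finset.sum_congr rfl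
            intro i _
            rw [hbE_succ]
            ring
        _ = (bE (n + 1) : ℤ) * 10 ^ (n + 1) - (bE 0 : ℤ) * 10 ^ 0 := this
        _ = 10 ^ (n + 1) * (bE (n + 1) : ℤ) := by
            simp [hbEdef, borrowExt]; ring
    rw [hDsum, hRsum, ← htel, ← Finset.sum_sub_distrib, ← Finset.sum_sub_distrib]
    apply Finset.sum_congr rfl
    intro i _
    rw [hedef]
    ring
  -- final borrow is zero
  have hbn : bE (n + 1) = 0 := by
    by_contra hne
    have h1 : bE (n + 1) = 1 := by have := hbE01 (n + 1); omega
    have hsum_le : (∑ i ∈ Finset.range (n + 1), e i * 10 ^ i) ≤ 10 ^ (n + 1) - 1 := by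
      rw [← nine_sum (n + 1)]
      apply Finset.sum_le_sum
      intro i hi
      simp only [Finset.mem_range] at hi
      have := (he_bound i (by omega)).2
      have hp : (0 : ℤ) < 10 ^ i := by positivity
      nlinarith
    have hpos : (0 : ℤ) < (D : ℤ) - (rev D : ℤ) := by
      have h : (rev D : ℤ) < (D : ℤ) := by exact_mod_cast hlt
      linarith
    rw [hEeq, h1] at hpos
    push_cast at hpos
    omega
  have hEsum : ((D - rev D : ℕ) : ℤ) = ∑ i ∈ Finset.range (n + 1), e i * 10 ^ i := by
    rw [Nat.cast_sub hlt.le, hEeq, hbn]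
    push_cast
    ring
  -- nat digits of E
  set f : ℕ → ℕ := fun i => (e i).toNat with hfdef
  have hf : ∀ i, i ≤ n → (f i : ℤ) = e i := by
    intro i hi
    exact Int.toNat_of_nonneg (he_bound i hi).1
  have hf9 : ∀ i, i ≤ n → f i ≤ 9 := by
    intro i hi
    have := (he_bound i hi).2
    have := hf i hi
    omega
  have hEnat : D - rev D = ∑ i ∈ Finset.range (n + 1), f i * 10 ^ i := by
    have : ((D - rev D : ℕ) : ℤ) = ((∑ i ∈ Finset.range (n + 1), f i * 10 ^ i : ℕ) : ℤ) := by
      rw [hEsum]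
      push_cast
      apply Finset.sum_congr rfl
      intro i hi
      simp only [Finset.mem_range] at hi
      rw [hf i (by omega)]
    exact_mod_cast this
  -- top digit of E nonzero
  have hfn : f n ≠ 0 := by
    intro h0
    have hE0 : D - rev D ≠ 0 := by omega
    have h10 : 10 ^ (n + 1) ≤ 10 * (D - rev D) :=
      hlen ▸ Nat.base_pow_length_digits_le 10 _ (by norm_num) hE0
    have hEsmall : D - rev D < 10 ^ n := by
      rw [hEnat, Finset.sum_range_succ, h0, zero_mul, add_zero]
      exact nat_sum_lt f n fun i hi => hf9 i (by omega)
    have : (10 : ℕ) ^ (n + 1) = 10 * 10 ^ n := by ring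
    omega
  -- digits of E
  have hM : Nat.digits 10 (D - rev D) = (List.range (n + 1)).map f := by
    have hE' : D - rev D = Nat.ofDigits 10 ((List.range (n + 1)).map f) := by
      rw [ofDigits_map_range]; exact hEnat
    rw [hE']
    apply Nat.digits_ofDigits 10 (by norm_num)
    · intro x hx
      simp only [List.mem_map, List.mem_range] at hx
      obtain ⟨i, hi, rfl⟩ := hx
      have := hf9 i (by omega); omega
    · intro h
      rw [List.getLast_eq_getElem]
      simp only [List.length_map, List.length_range]
      rw [List.getElem_map]
      simpa using hfn
  have hrevE : rev (D - rev D) = ∑ i ∈ Finset.range (n + 1), f (n - i) * 10 ^ i := by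
    rw [rev, hM, reverse_map_range, ofDigits_map_range]
  -- conclude
  rw [hrevE]
  have hDR : (D : ℤ) - (rev D : ℤ) = ∑ i ∈ Finset.range (n + 1), e i * 10 ^ i := by
    rw [← Nat.cast_sub hlt.le, hEsum]
  rw [hDR]
  push_cast
  rw [← Finset.sum_add_distrib]
  apply Finset.sum_congr rfl
  intro i hi
  simp only [Finset.mem_range] at hi
  have hi' : i ≤ n := by omega
  have hni : n - i ≤ n := by omega
  have hii : n - (n - i) = i := by omega
  rw [hf (n - i) hni, hedef]
  simp only
  rw [hii]
  have e1 : (borrowExt a n (i + 1) : ℤ) = (b i : ℤ) := rfl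
  have e2 : (borrowExt a n (n - i + 1) : ℤ) = (b (n - i) : ℤ) := rfl
  rw [e1, e2, hbEdef]
  ring
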